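/- Let K: ℝ → [0,∞) be bounded, non-decreasing on (−∞, M₁) and non-increasing on (M₂, ∞) with M₁ ≤ M₂, and integrable. Then for all L, w > 0: ∫_ℝ sup_{−L ≤ z ≤ L} K((x−z)/w) dx ≤ 2L‖K‖_∞ + w[(M₂−M₁)‖K‖_∞ + ∫_{−∞}^{M₁}K(x)dx + ∫_{M₂}^∞ K(x)dx]. -/

import Mathlib

open MeasureTheory Set

theorem stmt16 (K : ℝ → ℝ) (hK0 : ∀ x, 0 ≤ K x) (hKb : BddAbove (Set.range K))
    (M₁ M₂ : ℝ) (hM : M₁ ≤ M₂)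
    (hmono : MonotoneOn K (Set.Iio M₁)) (hanti : AntitoneOn K (Set.Ioi M₂))
    (hKint : Integrable K) (L w : ℝ) (hL : 0 < L) (hw : 0 < w) :
    (∫ x, ⨆ z : Set.Icc (-L) L, K ((x - (z : ℝ)) / w))
      ≤ 2 * L * (⨆ x, K x)
        + w * ((M₂ - M₁) * (⨆ x, K x) + (∫ x in Set.Iic M₁, K x)
          + ∫ x in Set.Ici M₂, K x) := by
  set C : ℝ := ⨆ x, K x with hC
  have hCle : ∀ y, K y ≤ C := fun y => le_ciSup hKb y
  have hC0 : 0 ≤ C := (hK0 0).trans (hCle 0)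
  set a : ℝ := M₁ * w - L with ha
  set b : ℝ := M₂ * w + L with hb
  have hab : a ≤ b := by
    have := mul_le_mul_of_nonneg_right hM hw.le
    simp only [ha, hb]; linarith
  set f₁ : ℝ → ℝ := (Iio a).indicator (fun x => K ((x + L) / w)) with hf₁
  set f₂ : ℝ → ℝ := (Icc a b).indicator (fun _ => C) with hf₂
  set f₃ : ℝ → ℝ := (Ioi b).indicator (fun x => K ((x - L) / w)) with hf₃
  -- pointwise bound
  have hpt : ∀ x, (⨆ z : Set.Icc (-L) L, K ((x - (z : ℝ)) / w)) ≤ f₁ x + f₂ x + f₃ x := by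
    intro x
    have h1nn : 0 ≤ f₁ x := Set.indicator_nonneg (fun y _ => hK0 _) x
    have h2nn : 0 ≤ f₂ x := Set.indicator_nonneg (fun y _ => hC0) x
    have h3nn : 0 ≤ f₃ x := Set.indicator_nonneg (fun y _ => hK0 _) x
    rcases lt_trichotomy x a with hx | hx | hx
    · have : f₁ x = K ((x + L) / w) := Set.indicator_of_mem (show x ∈ Iio a from hx) _
      have key : (⨆ z : Set.Icc (-L) L, K ((x - (z : ℝ)) / w)) ≤ K ((x + L) / w) := by
        apply Real.iSup_le _ (hK0 _)
        rintro ⟨z, hz1, hz2⟩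
        have hle : (x - z) / w ≤ (x + L) / w := by
          exact (div_le_div_iff_of_pos_right hw).mpr (by linarith)
        have hlt : (x + L) / w < M₁ := by
          rw [div_lt_iff₀ hw]; simp only [ha] at hx; linarith [mul_comm M₁ w]
        exact hmono (lt_of_le_of_lt hle hlt) hlt hle
      linarith
    · have h2 : f₂ x = C := Set.indicator_of_mem (show x ∈ Icc a b from ⟨le_of_eq hx.symm, hx ▸ hab⟩) _
      have key : (⨆ z : Set.Icc (-L) L, K ((x - (z : ℝ)) / w)) ≤ C :=
        Real.iSup_le (fun z => hCle _) hC0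
      linarith
    · rcases le_or_gt x b with hxb | hxb
      · have h2 : f₂ x = C := Set.indicator_of_mem (show x ∈ Icc a b from ⟨hx.le, hxb⟩) _
        have key : (⨆ z : Set.Icc (-L) L, K ((x - (z : ℝ)) / w)) ≤ C :=
          Real.iSup_le (fun z => hCle _) hC0
        linarith
      · have h3 : f₃ x = K ((x - L) / w) := Set.indicator_of_mem (show x ∈ Ioi b from hxb) _
        have key : (⨆ z : Set.Icc (-L) L, K ((x - (z : ℝ)) / w)) ≤ K ((x - L) / w) := by
          apply Real.iSup_le _ (hK0 _)
          rintro ⟨z, hz1, hz2⟩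
          have hle : (x - L) / w ≤ (x - z) / w := (div_le_div_iff_of_pos_right hw).mpr (by linarith)
          have hgt : M₂ < (x - L) / w := by
            rw [lt_div_iff₀ hw]; simp only [hb] at hxb; linarith [mul_comm M₂ w]
          exact hanti (mem_Ioi.mpr hgt) (mem_Ioi.mpr (lt_of_lt_of_le hgt hle)) hle
        linarith
  -- integrability and integrals of the pieces
  have hKm := hKint.aestronglyMeasurable
  have hF₁ : Integrable ((Iio M₁).indicator K) := hKint.indicator measurableSet_Iio
  have hF₃ : Integrable ((Ioi M₂).indicator K) := hKint.indicator measurableSet_Ioi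
  have hcomp₁ : ∀ x : ℝ, f₁ x = (Iio M₁).indicator K ((x + L) / w) := by
    intro x
    have : x ∈ Iio a ↔ (x + L) / w ∈ Iio M₁ := by
      simp only [mem_Iio, div_lt_iff₀ hw, ha]
      constructor <;> intro h <;> nlinarith [mul_comm M₁ w]
    simp only [hf₁, Set.indicator_apply, this]
  have hcomp₃ : ∀ x : ℝ, f₃ x = (Ioi M₂).indicator K ((x - L) / w) := by
    intro x
    have : x ∈ Ioi b ↔ (x - L) / w ∈ Ioi M₂ := by
      simp only [mem_Ioi, lt_div_iff₀ hw, hb]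
      constructor <;> intro h <;> nlinarith [mul_comm M₂ w]
    simp only [hf₃, Set.indicator_apply, this]
  have hi₁ : Integrable f₁ := by
    rw [funext hcomp₁]
    exact ((hF₁.comp_div hw.ne').comp_add_right L)
  have hi₃ : Integrable f₃ := by
    rw [funext hcomp₃]
    exact ((hF₃.comp_div hw.ne').comp_sub_right L)
  have hi₂ : Integrable f₂ := by
    rw [hf₂, integrable_indicator_iff measurableSet_Icc]
    exact integrableOn_const measure_Icc_lt_top.ne
  have hInt₁ : ∫ x, f₁ x = w * ∫ x in Iic M₁, K x := by
    simp_rw [hcomp₁]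
    rw [show (fun x : ℝ => (Iio M₁).indicator K ((x + L) / w)) = fun x : ℝ => ((fun y => (Iio M₁).indicator K (y / w)) (x + L)) from rfl]
    rw [integral_add_right_eq_self (fun y : ℝ => (Iio M₁).indicator K (y / w)) L]
    rw [Measure.integral_comp_div ((Iio M₁).indicator K) w]
    rw [integral_indicator measurableSet_Iio, abs_of_pos hw, smul_eq_mul]
    congr 1
    exact setIntegral_congr_set Iio_ae_eq_Iic
  have hInt₃ : ∫ x, f₃ x = w * ∫ x in Ici M₂, K x := by
    simp_rw [hcomp₃, sub_eq_add_neg]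
    rw [show (fun x : ℝ => (Ioi M₂).indicator K ((x + -L) / w)) = fun x : ℝ => ((fun y => (Ioi M₂).indicator K (y / w)) (x + -L)) from rfl]
    rw [integral_add_right_eq_self (fun y : ℝ => (Ioi M₂).indicator K (y / w)) (-L)]
    rw [Measure.integral_comp_div ((Ioi M₂).indicator K) w]
    rw [integral_indicator measurableSet_Ioi, abs_of_pos hw, smul_eq_mul]
    congr 1
    exact setIntegral_congr_set Ioi_ae_eq_Ici
  have hInt₂ : ∫ x, f₂ x = (b - a) * C := by
    rw [hf₂, integral_indicator measurableSet_Icc, setIntegral_const, smul_eq_mul]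
    congr 1
    rw [Real.volume_real_Icc_of_le hab]
  have hsum : Integrable (fun x => f₁ x + f₂ x + f₃ x) := (hi₁.add hi₂).add hi₃
  have hmain : (∫ x, ⨆ z : Set.Icc (-L) L, K ((x - (z : ℝ)) / w))
      ≤ ∫ x, (f₁ x + f₂ x + f₃ x) := by
    apply integral_mono_of_nonneg
    · filter_upwards with x
      exact Real.iSup_nonneg (fun z => hK0 _)
    · exact hsum
    · filter_upwards with x using hpt x
  calc (∫ x, ⨆ z : Set.Icc (-L) L, K ((x - (z : ℝ)) / w))
      ≤ ∫ x, (f₁ x + f₂ x + f₃ x) := hmain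
    _ = (∫ x, f₁ x) + (∫ x, f₂ x) + (∫ x, f₃ x) := by
        have h12 : Integrable (fun x => f₁ x + f₂ x) := hi₁.add hi₂
        rw [integral_add h12 hi₃, integral_add hi₁ hi₂]
    _ = 2 * L * C + w * ((M₂ - M₁) * C + (∫ x in Iic M₁, K x) + ∫ x in Ici M₂, K x) := by
        rw [hInt₁, hInt₂, hInt₃]
        simp only [ha, hb]; ring
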